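/- Let q be a prime power and let μ be an integer with μ ≥ q+3. Then every set S of q+μ points of PG(2,q) has the property that each point Q ∈ PG(2,q) \ S lies on at least μ unordered pairs of distinct points of S collinear with Q; consequently, if S spans PG(2,q) and S ≠ PG(2,q), then S is a (1,μ)-saturating set, and every minimal (1,μ)-saturating set in PG(2,q) has size at most min{q+μ, q²+q}. -/

import Mathlib

open Module

/-- Points of `PG(N,q)`: 1-dimensional subspaces of `F^(N+1)`. -/
abbrev PGPoint (F : Type) [Field F] (N : ℕ) :=
  {W : Submodule F (Fin (N + 1) → F) // Module.finrank F W = 1}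

/-- Lines of `PG(N,q)`: 2-dimensional subspaces of `F^(N+1)`. -/
abbrev PGLine (F : Type) [Field F] (N : ℕ) :=
  {W : Submodule F (Fin (N + 1) → F) // Module.finrank F W = 2}

/-- The number of points of `S` lying on the line `L`. -/
noncomputable def lineCount {F : Type} [Field F] {N : ℕ}
    (S : Set (PGPoint F N)) (L : PGLine F N) : ℕ :=
  {P : PGPoint F N | P ∈ S ∧ P.1 ≤ L.1}.ncard

/-- The number of unordered pairs of distinct points of `S` collinear with `Q`
(the number of secants of `S` through `Q`, counted with multiplicity). -/
noncomputable def pairCount {F : Type} [Field F] {N : ℕ}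
    (S : Set (PGPoint F N)) (Q : PGPoint F N) : ℕ :=
  {e : Set (PGPoint F N) |
    ∃ A ∈ S, ∃ B ∈ S, A ≠ B ∧ e = {A, B} ∧ Q.1 ≤ A.1 ⊔ B.1}.ncard

/-- `S` spans (generates) `PG(N,q)`. -/
def Spans {F : Type} [Field F] {N : ℕ} (S : Set (PGPoint F N)) : Prop :=
  (⨆ P ∈ S, P.1) = ⊤

/-- `S` is a `(1,μ)`-saturating set. -/
def IsSaturating {F : Type} [Field F] {N : ℕ} (S : Set (PGPoint F N)) (μ : ℕ) : Prop :=
  Spans S ∧ S ≠ Set.univ ∧ ∀ Q : PGPoint F N, Q ∉ S → μ ≤ pairCount S Q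

/-- `S` is an optimal `(1,μ)`-saturating set (`(1,μ)`-OS set). -/
def IsOS {F : Type} [Field F] {N : ℕ} (S : Set (PGPoint F N)) (μ : ℕ) : Prop :=
  Spans S ∧ S ≠ Set.univ ∧ ∀ Q : PGPoint F N, Q ∉ S → pairCount S Q = μ

/-- `S` is a minimal `(1,μ)`-saturating set: no proper subset is `(1,μ)`-saturating. -/
def IsMinimalSaturating {F : Type} [Field F] {N : ℕ} (S : Set (PGPoint F N)) (μ : ℕ) : Prop :=
  IsSaturating S μ ∧ ∀ T : Set (PGPoint F N), T ⊂ S → ¬ IsSaturating T μ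

namespace Stmt11

set_option linter.unusedSectionVars false
attribute [local instance] Classical.propDecidable

variable {F : Type} [Field F] [Fintype F]

noncomputable instance : Fintype (Submodule F (Fin 3 → F)) :=
  Fintype.ofInjective (SetLike.coe : Submodule F (Fin 3 → F) → Set (Fin 3 → F))
    SetLike.coe_injective

noncomputable instance : Fintype (PGPoint F 2) := by
  unfold PGPoint; infer_instance

lemma fr3 : finrank F (Fin 3 → F) = 3 := Module.finrank_fin_fun F

lemma helper_card_image_mul {α β : Type*} [DecidableEq β] (s : Finset α) (f : α → β) (k : ℕ)
    (h : ∀ b ∈ s.image f, (s.filter (fun a => f a = b)).card = k) :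
    s.card = (s.image f).card * k := by
  rw [Finset.card_eq_sum_card_image f s, Finset.sum_congr rfl h, Finset.sum_const, smul_eq_mul]

/-- nonzero vectors of a submodule, as a finset -/
lemma card_nonzero (W : Submodule F (Fin 3 → F)) :
    (Finset.univ.filter (fun v : Fin 3 → F => v ∈ W ∧ v ≠ 0)).card
      = Fintype.card F ^ finrank F W - 1 := by
  classical
  have h1 : (Finset.univ.filter (fun v : Fin 3 → F => v ∈ W ∧ v ≠ 0))
      = (Finset.univ.filter (fun v : Fin 3 → F => v ∈ W)).erase 0 := by
    ext v
    simp [Finset.mem_erase, Finset.mem_filter, and_comm]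
  rw [h1, Finset.card_erase_of_mem (by simp [W.zero_mem]),
    ← Fintype.card_subtype, card_eq_pow_finrank (K := F)]

lemma span_eq_of_mem_ne_zero {L : Submodule F (Fin 3 → F)} (hL : finrank F L = 1)
    {v : Fin 3 → F} (hv : v ∈ L) (hv0 : v ≠ 0) : (F ∙ v) = L := by
  apply Submodule.eq_of_le_of_finrank_le ((Submodule.span_singleton_le_iff_mem v L).mpr hv)
  rw [hL, finrank_span_singleton hv0]

/-- Main point count: the number of projective points inside `W`, times `q-1`, is `q^dim W - 1`. -/
lemma points_mul (W : Submodule F (Fin 3 → F)) :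
    {P : PGPoint F 2 | P.1 ≤ W}.ncard * (Fintype.card F - 1)
      = Fintype.card F ^ finrank F W - 1 := by
  classical
  set s : Finset (Fin 3 → F) := Finset.univ.filter (fun v => v ∈ W ∧ v ≠ 0) with hs
  set f : (Fin 3 → F) → Submodule F (Fin 3 → F) := fun v => F ∙ v with hf
  have himg : ∀ L ∈ s.image f, finrank F L = 1 ∧ L ≤ W := by
    intro L hL
    simp only [hs, hf, Finset.mem_image, Finset.mem_filter] at hL
    obtain ⟨v, ⟨-, hvW, hv0⟩, rfl⟩ := hL
    exact ⟨finrank_span_singleton hv0, (Submodule.span_singleton_le_iff_mem v W).mpr hvW⟩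
  have hfib : ∀ L ∈ s.image f,
      (s.filter (fun v => f v = L)).card = Fintype.card F - 1 := by
    intro L hL
    obtain ⟨hL1, hLW⟩ := himg L hL
    have h2 : s.filter (fun v => f v = L)
        = Finset.univ.filter (fun v : Fin 3 → F => v ∈ L ∧ v ≠ 0) := by
      ext v
      simp only [hs, hf, Finset.mem_filter, Finset.mem_univ, true_and]
      constructor
      · rintro ⟨⟨hvW, hv0⟩, rfl⟩
        exact ⟨Submodule.mem_span_singleton_self v, hv0⟩
      · rintro ⟨hvL, hv0⟩
        exact ⟨⟨hLW hvL, hv0⟩, span_eq_of_mem_ne_zero hL1 hvL hv0⟩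
    rw [h2, card_nonzero, hL1, pow_one]
  have hcount := helper_card_image_mul s f _ hfib
  rw [card_nonzero W] at hcount
  -- identify the image with the set of projective points in W
  have hset : Subtype.val '' {P : PGPoint F 2 | P.1 ≤ W} = ↑(s.image f) := by
    ext L
    simp only [Set.mem_image, Set.mem_setOf_eq, Finset.coe_image, Finset.mem_coe]
    constructor
    · rintro ⟨P, hPW, rfl⟩
      have hne : P.1 ≠ ⊥ := by
        intro h
        have := P.2
        rw [h, finrank_bot] at this
        omega
      obtain ⟨v, hv, hv0⟩ := Submodule.exists_mem_ne_zero_of_ne_bot hne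
      refine ⟨v, ?_, span_eq_of_mem_ne_zero P.2 hv hv0⟩
      simp only [hs, Finset.mem_filter, Finset.mem_univ, true_and]
      exact ⟨hPW hv, hv0⟩
    · rintro ⟨v, hv, rfl⟩
      simp only [hs, Finset.mem_filter, Finset.mem_univ, true_and] at hv
      exact ⟨⟨F ∙ v, finrank_span_singleton hv.2⟩,
        (Submodule.span_singleton_le_iff_mem v W).mpr hv.1, rfl⟩
  have hn : {P : PGPoint F 2 | P.1 ≤ W}.ncard = (s.image f).card := by
    rw [← Set.ncard_coe_finset, ← hset, Set.ncard_image_of_injective _ Subtype.val_injective]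
  rw [hn, ← hcount]

-- continuation, appended to aux2 content for testing


variable {F : Type} [Field F] [Fintype F]

lemma two_le_q : 2 ≤ Fintype.card F := Fintype.one_lt_card

lemma pow_sub_one (q d : ℕ) (hq : 1 ≤ q) :
    q ^ d - 1 = (Finset.range d).sum (fun i => q ^ i) * (q - 1) := by
  obtain ⟨k, rfl⟩ := Nat.exists_eq_add_of_le hq
  induction d with
  | zero => simp
  | succ n ih =>
    rw [Finset.sum_range_succ, Nat.add_mul, ← ih, pow_succ]
    have h1 : 1 ≤ (1 + k) ^ n := Nat.one_le_pow _ _ (by omega)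
    have : (1 + k) ^ n * (1 + k) = (1 + k) ^ n + (1+k)^n * k := by ring
    rw [this]
    have : (1 + k) ^ n * (1 + k - 1) = (1+k)^n * k := by simp
    omega

lemma points_card (W : Submodule F (Fin 3 → F)) :
    {P : PGPoint F 2 | P.1 ≤ W}.ncard
      = (Finset.range (finrank F W)).sum (fun i => Fintype.card F ^ i) := by
  have h := points_mul W
  rw [pow_sub_one _ _ (by have := two_le_q (F := F); omega)] at h
  exact Nat.eq_of_mul_eq_mul_right (by have := two_le_q (F := F); omega) h

lemma points_top : (Set.univ : Set (PGPoint F 2)).ncard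
    = Fintype.card F ^ 2 + Fintype.card F + 1 := by
  have h := points_card (F := F) ⊤
  rw [finrank_top, fr3] at h
  simp only [le_top, Set.setOf_true] at h
  rw [h]
  simp [Finset.sum_range_succ]
  ring

lemma points_line {L : Submodule F (Fin 3 → F)} (hL : finrank F L = 2) :
    {P : PGPoint F 2 | P.1 ≤ L}.ncard = Fintype.card F + 1 := by
  have h := points_card L
  rw [hL] at h
  rw [h]
  simp [Finset.sum_range_succ]
  omega

lemma points_le {W : Submodule F (Fin 3 → F)} (hW : finrank F W ≤ 2) :
    {P : PGPoint F 2 | P.1 ≤ W}.ncard ≤ Fintype.card F + 1 := by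
  rw [points_card W]
  calc (Finset.range (finrank F W)).sum (fun i => Fintype.card F ^ i)
      ≤ (Finset.range 2).sum (fun i => Fintype.card F ^ i) :=
        Finset.sum_le_sum_of_subset (Finset.range_subset_range.mpr hW)
    _ = Fintype.card F + 1 := by simp [Finset.sum_range_succ]; omega

lemma sup_rank_two {A B : PGPoint F 2} (hne : A ≠ B) : finrank F ↥(A.1 ⊔ B.1) = 2 := by
  have hinf : A.1 ⊓ B.1 = ⊥ := by
    by_contra h
    have h1 : 1 ≤ finrank F ↥(A.1 ⊓ B.1) := by
      rw [Nat.one_le_iff_ne_zero]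
      intro h0
      exact h (Submodule.finrank_eq_zero.mp h0)
    have e1 : A.1 ⊓ B.1 = A.1 :=
      Submodule.eq_of_le_of_finrank_le inf_le_left (by rw [A.2]; exact h1)
    have e2 : A.1 ⊓ B.1 = B.1 :=
      Submodule.eq_of_le_of_finrank_le inf_le_right (by rw [B.2]; exact h1)
    exact hne (Subtype.ext (e1.symm.trans e2))
  have := Submodule.finrank_sup_add_finrank_inf_eq A.1 B.1
  rw [hinf, finrank_bot, A.2, B.2] at this
  omega

lemma line_eq_sup {Q A : PGPoint F 2} {L : Submodule F (Fin 3 → F)} (hL : finrank F L = 2)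
    (hQ : Q.1 ≤ L) (hA : A.1 ≤ L) (hne : Q ≠ A) : L = Q.1 ⊔ A.1 :=
  (Submodule.eq_of_le_of_finrank_le (sup_le hQ hA) (by rw [hL, sup_rank_two hne])).symm


lemma two_mul_le_choose : ∀ n : ℕ, 2 * n ≤ n.choose 2 + 3
  | 0 => by decide
  | 1 => by decide
  | n+2 => by
    have ih := two_mul_le_choose (n+1)
    have h : (n+2).choose 2 = (n+1).choose 1 + (n+1).choose 2 :=
      Nat.choose_succ_succ (n+1) 1
    rw [Nat.choose_one_right] at h
    omega

variable {F : Type} [Field F] [Fintype F]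

lemma pairCount_bound {S : Set (PGPoint F 2)} {Q : PGPoint F 2} (hQ : Q ∉ S) :
    2 * S.ncard ≤ pairCount S Q + 3 * (Fintype.card F + 1) := by
  classical
  set q := Fintype.card F with hqdef
  set Sf : Finset (PGPoint F 2) := (Set.toFinite S).toFinset with hSf
  have hmemS : ∀ A, A ∈ Sf ↔ A ∈ S := fun A => Set.Finite.mem_toFinset _
  have hScard : S.ncard = Sf.card := Set.ncard_eq_toFinset_card S (Set.toFinite S)
  set g : PGPoint F 2 → Submodule F (Fin 3 → F) := fun A => Q.1 ⊔ A.1 with hg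
  set LQ := Sf.image g with hLQ
  have hLQ2 : ∀ L ∈ LQ, finrank F ↥L = 2 ∧ Q.1 ≤ L := by
    intro L hL
    rw [hLQ, Finset.mem_image] at hL
    obtain ⟨A, hA, rfl⟩ := hL
    have hQA : Q ≠ A := fun h => hQ (h ▸ (hmemS A).mp hA)
    exact ⟨sup_rank_two hQA, le_sup_left⟩
  have hq2 : 2 ≤ q := two_le_q
  -- the number of lines through Q is at most q+1
  have hLQcard : LQ.card ≤ q + 1 := by
    set fib : Submodule F (Fin 3 → F) → Finset (PGPoint F 2) :=
      fun L => Finset.univ.filter (fun P => P.1 ≤ L ∧ P ≠ Q) with hfib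
    have hfibcard : ∀ L ∈ LQ, (fib L).card = q := by
      intro L hL
      obtain ⟨h2, hQL⟩ := hLQ2 L hL
      have he : fib L = ((Set.toFinite {P : PGPoint F 2 | P.1 ≤ L}).toFinset).erase Q := by
        ext P
        simp [hfib, Finset.mem_erase, Set.Finite.mem_toFinset, and_comm]
      rw [he, Finset.card_erase_of_mem (by rw [Set.Finite.mem_toFinset]; exact hQL),
        ← Set.ncard_eq_toFinset_card _ _, points_line h2]
      omega
    have hdisj : ∀ L1 ∈ LQ, ∀ L2 ∈ LQ, L1 ≠ L2 → Disjoint (fib L1) (fib L2) := by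
      intro L1 h1 L2 h2 hne
      rw [Finset.disjoint_left]
      intro P hP1 hP2
      simp only [hfib, Finset.mem_filter] at hP1 hP2
      exact hne ((line_eq_sup (hLQ2 L1 h1).1 (hLQ2 L1 h1).2 hP1.2.1 (Ne.symm hP1.2.2)).trans
        (line_eq_sup (hLQ2 L2 h2).1 (hLQ2 L2 h2).2 hP2.2.1 (Ne.symm hP2.2.2)).symm)
    have hsub : LQ.biUnion fib ⊆ Finset.univ.erase Q := by
      intro P hP
      rw [Finset.mem_biUnion] at hP
      obtain ⟨L, hL, hPL⟩ := hP
      simp only [hfib, Finset.mem_filter] at hPL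
      exact Finset.mem_erase.mpr ⟨hPL.2.2, Finset.mem_univ P⟩
    have hcard1 := Finset.card_le_card hsub
    rw [Finset.card_biUnion hdisj, Finset.sum_congr rfl hfibcard, Finset.sum_const,
      smul_eq_mul] at hcard1
    have hPG : Fintype.card (PGPoint F 2) = q^2 + q + 1 := by
      rw [← Nat.card_eq_fintype_card, ← Set.ncard_univ]; exact points_top
    rw [Finset.card_erase_of_mem (Finset.mem_univ Q), Finset.card_univ, hPG] at hcard1
    have hr : (q + 1) * q = q ^ 2 + q := by ring
    have h2 : LQ.card * q ≤ (q + 1) * q := by omega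
    exact Nat.le_of_mul_le_mul_right h2 (by omega)
  -- partition of S by the lines through Q
  have hSsum : Sf.card = ∑ L ∈ LQ, (Sf.filter (fun A => g A = L)).card :=
    Finset.card_eq_sum_card_image g Sf
  have hfilter_eq : ∀ L ∈ LQ, Sf.filter (fun A => g A = L)
      = Sf.filter (fun A => A.1 ≤ L) := by
    intro L hL
    obtain ⟨h2, hQL⟩ := hLQ2 L hL
    ext A
    simp only [Finset.mem_filter, and_congr_right_iff]
    intro hA
    have hQA : Q ≠ A := fun h => hQ (h ▸ (hmemS A).mp hA)
    constructor
    · rintro rfl; exact le_sup_right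
    · intro hAL; exact (line_eq_sup h2 hQL hAL hQA).symm
  -- pairs on each line
  set Ebig : Set (Set (PGPoint F 2)) :=
    {e | ∃ A ∈ S, ∃ B ∈ S, A ≠ B ∧ e = {A, B} ∧ Q.1 ≤ A.1 ⊔ B.1} with hE
  have hpc : pairCount S Q = (Set.toFinite Ebig).toFinset.card :=
    Set.ncard_eq_toFinset_card _ _
  set pairs : Submodule F (Fin 3 → F) → Finset (Set (PGPoint F 2)) :=
    fun L => ((Sf.filter (fun A => A.1 ≤ L)).powersetCard 2).image
      (fun t : Finset (PGPoint F 2) => (t : Set (PGPoint F 2))) with hpairs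
  have hpairscard : ∀ L ∈ LQ,
      (pairs L).card = ((Sf.filter (fun A => A.1 ≤ L)).card).choose 2 := by
    intro L hL
    rw [hpairs]
    rw [Finset.card_image_of_injective _ Finset.coe_injective, Finset.card_powersetCard]
  have hpairs_sub : ∀ L ∈ LQ, pairs L ⊆ (Set.toFinite Ebig).toFinset := by
    intro L hL e he
    obtain ⟨h2, hQL⟩ := hLQ2 L hL
    simp only [hpairs, Finset.mem_image] at he
    obtain ⟨t, ht, rfl⟩ := he
    rw [Finset.mem_powersetCard] at ht
    obtain ⟨htsub, htcard⟩ := ht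
    obtain ⟨A, B, hAB, rfl⟩ := Finset.card_eq_two.mp htcard
    have hA := Finset.mem_filter.mp (htsub (by simp : A ∈ ({A, B} : Finset _)))
    have hB := Finset.mem_filter.mp (htsub (by simp : B ∈ ({A, B} : Finset _)))
    rw [Set.Finite.mem_toFinset]
    refine ⟨A, (hmemS A).mp hA.1, B, (hmemS B).mp hB.1, hAB, by simp, ?_⟩
    rw [← line_eq_sup h2 hA.2 hB.2 hAB]
    exact hQL
  have hpairs_disj : ∀ L1 ∈ LQ, ∀ L2 ∈ LQ, L1 ≠ L2 → Disjoint (pairs L1) (pairs L2) := by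
    intro L1 h1 L2 h2 hne
    rw [Finset.disjoint_left]
    intro e he1 he2
    simp only [hpairs, Finset.mem_image] at he1 he2
    obtain ⟨t1, ht1, rfl⟩ := he1
    obtain ⟨t2, ht2, het⟩ := he2
    have h12 : t2 = t1 := Finset.coe_injective het
    subst h12
    rw [Finset.mem_powersetCard] at ht1 ht2
    obtain ⟨A, B, hAB, rfl⟩ := Finset.card_eq_two.mp ht1.2
    have hA1 := (Finset.mem_filter.mp (ht1.1 (by simp : A ∈ ({A, B} : Finset _)))).2
    have hB1 := (Finset.mem_filter.mp (ht1.1 (by simp : B ∈ ({A, B} : Finset _)))).2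
    have hA2 := (Finset.mem_filter.mp (ht2.1 (by simp : A ∈ ({A, B} : Finset _)))).2
    have hB2 := (Finset.mem_filter.mp (ht2.1 (by simp : B ∈ ({A, B} : Finset _)))).2
    exact hne ((line_eq_sup (hLQ2 L1 h1).1 hA1 hB1 hAB).trans
      (line_eq_sup (hLQ2 L2 h2).1 hA2 hB2 hAB).symm)
  have hbig : ∑ L ∈ LQ, (pairs L).card ≤ pairCount S Q := by
    rw [hpc]
    calc ∑ L ∈ LQ, (pairs L).card = (LQ.biUnion pairs).card :=
          (Finset.card_biUnion hpairs_disj).symm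
      _ ≤ _ := Finset.card_le_card (by
          intro e he
          rw [Finset.mem_biUnion] at he
          obtain ⟨L, hL, he⟩ := he
          exact hpairs_sub L hL he)
  have hpoint : ∀ L ∈ LQ, 2 * (Sf.filter (fun A => g A = L)).card ≤ (pairs L).card + 3 := by
    intro L hL
    rw [hfilter_eq L hL, hpairscard L hL]
    exact two_mul_le_choose _
  calc 2 * S.ncard = ∑ L ∈ LQ, 2 * (Sf.filter (fun A => g A = L)).card := by
        rw [hScard, hSsum, Finset.mul_sum]
    _ ≤ ∑ L ∈ LQ, ((pairs L).card + 3) := Finset.sum_le_sum hpoint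
    _ = (∑ L ∈ LQ, (pairs L).card) + 3 * LQ.card := by
        rw [Finset.sum_add_distrib, Finset.sum_const, smul_eq_mul]; ring
    _ ≤ pairCount S Q + 3 * (q + 1) := by omega

lemma spans_of_large {S : Set (PGPoint F 2)} (h : Fintype.card F + 2 ≤ S.ncard) :
    Spans S := by
  by_contra hs
  have hW : finrank F ↥(⨆ P ∈ S, P.1) ≤ 2 := by
    have h3 := Submodule.finrank_le (⨆ P ∈ S, P.1)
    rw [fr3] at h3
    rcases Nat.lt_or_ge (finrank F ↥(⨆ P ∈ S, P.1)) 3 with h' | h'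
    · omega
    · exact absurd (Submodule.eq_top_of_finrank_eq (by rw [fr3]; omega)) hs
  have hsub : S ⊆ {P : PGPoint F 2 | P.1 ≤ ⨆ P ∈ S, P.1} := fun P hP =>
    le_iSup₂ (f := fun (P : PGPoint F 2) (_ : P ∈ S) => P.1) P hP
  have h1 := Set.ncard_le_ncard hsub (Set.toFinite _)
  have h2 := points_le hW
  omega

end Stmt11

/-- Let `μ ≥ q+3`. Every set `S` of `q+μ` points of `PG(2,q)`
is such that each point `Q ∉ S` lies on at least `μ` unordered pairs of distinct
points of `S` collinear with `Q`; consequently if `S` spans `PG(2,q)` and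
`S ≠ PG(2,q)` then `S` is `(1,μ)`-saturating, and every minimal
`(1,μ)`-saturating set of `PG(2,q)` has size at most `min(q+μ, q²+q)`. -/
theorem stmt_11 (F : Type) [Field F] [Fintype F] (q μ : ℕ)
    (hq : Fintype.card F = q) (hμ : q + 3 ≤ μ) :
    (∀ S : Set (PGPoint F 2), S.ncard = q + μ →
      (∀ Q : PGPoint F 2, Q ∉ S → μ ≤ pairCount S Q) ∧
      (Spans S → S ≠ Set.univ → IsSaturating S μ)) ∧
    ∀ S : Set (PGPoint F 2), IsMinimalSaturating S μ →
      S.ncard ≤ min (q + μ) (q ^ 2 + q) := by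
  subst hq
  have hq2 := Stmt11.two_le_q (F := F)
  constructor
  · intro S hS
    have key : ∀ Q : PGPoint F 2, Q ∉ S → μ ≤ pairCount S Q := by
      intro Q hQ
      have hb := Stmt11.pairCount_bound hQ
      rw [hS] at hb
      omega
    exact ⟨key, fun h1 h2 => ⟨h1, h2, key⟩⟩
  · intro S hSmin
    obtain ⟨⟨hsp, hne, hsat⟩, hmin⟩ := hSmin
    have huniv : (Set.univ : Set (PGPoint F 2)).ncard
        = Fintype.card F ^ 2 + Fintype.card F + 1 := Stmt11.points_top
    have h1 : S.ncard ≤ Fintype.card F ^ 2 + Fintype.card F := by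
      have hlt : S.ncard < (Set.univ : Set (PGPoint F 2)).ncard :=
        Set.ncard_lt_ncard (Set.ssubset_univ_iff.mpr hne) (Set.toFinite _)
      omega
    have h2 : S.ncard ≤ Fintype.card F + μ := by
      by_contra hgt
      push_neg at hgt
      obtain ⟨x, hx⟩ : S.Nonempty := Set.nonempty_of_ncard_ne_zero (by omega)
      have hTS : S \ {x} ⊂ S := Set.sdiff_singleton_ssubset.mpr hx
      have hTcard : (S \ {x}).ncard = S.ncard - 1 :=
        Set.ncard_diff_singleton_of_mem hx
      apply hmin (S \ {x}) hTS
      refine ⟨Stmt11.spans_of_large (by omega), ?_, ?_⟩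
      · intro hTuniv
        exact hne (Set.eq_univ_of_univ_subset (hTuniv ▸ hTS.subset))
      · intro Q hQ
        have hb := Stmt11.pairCount_bound (S := S \ {x}) hQ
        omega
    exact le_min h2 h1
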